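/- (L∞ bound for saturation) Suppose 0 ≤ s_i^0 ≤ 1 for all i and λM ≤ 1. Then the DFLU scheme s_i^{n+1} = s_i^n − λ(F^n_{i+1/2} − F^n_{i−1/2}) satisfies 0 ≤ s_i^n ≤ 1 for all i and n. -/
import Mathlib


/-- `L^∞` bound for the saturation computed by the DFLU scheme:
if `0 ≤ s_i^0 ≤ 1` and `λM ≤ 1` then `0 ≤ s_i^n ≤ 1` for all `i, n`. -/
theorem dflu_saturation_linfty_bound
    (f : ℝ → ℝ → ℝ) (θ : ℝ → ℝ) (a' : ℝ → ℝ) (lam M : ℝ)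
    (hθ : ∀ c ∈ Set.Icc (0:ℝ) 1, θ c ∈ Set.Icc (0:ℝ) 1)
    (hf0 : ∀ c ∈ Set.Icc (0:ℝ) 1, f 0 c = 0)
    (hf1 : ∀ c ∈ Set.Icc (0:ℝ) 1, f 1 c = 0)
    (hnn : ∀ c ∈ Set.Icc (0:ℝ) 1, ∀ s ∈ Set.Icc (0:ℝ) 1, 0 ≤ f s c)
    (hdiff : ∀ c ∈ Set.Icc (0:ℝ) 1, ∀ s ∈ Set.Icc (0:ℝ) 1,
      DifferentiableAt ℝ (fun t => f t c) s)
    (hinc : ∀ c ∈ Set.Icc (0:ℝ) 1, MonotoneOn (fun t => f t c) (Set.Icc 0 (θ c)))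
    (hdec : ∀ c ∈ Set.Icc (0:ℝ) 1, AntitoneOn (fun t => f t c) (Set.Icc (θ c) 1))
    (hM : ∀ c ∈ Set.Icc (0:ℝ) 1, ∀ s ∈ Set.Icc (0:ℝ) 1,
      |deriv (fun t => f t c) s| ≤ M)
    (ha' : ∀ c ∈ Set.Icc (0:ℝ) 1, 0 < a' c)
    (hM' : ∀ c ∈ Set.Icc (0:ℝ) 1, ∀ s ∈ Set.Icc (0:ℝ) 1,
      f s c / (s + a' c) ≤ M)
    (hlam : 0 < lam) (hcfl : lam * M ≤ 1)
    (s : ℕ → ℤ → ℝ) (c : ℕ → ℤ → ℝ)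
    (hc : ∀ n i, c n i ∈ Set.Icc (0:ℝ) 1)
    (hs0 : ∀ i, s 0 i ∈ Set.Icc (0:ℝ) 1)
    (F : ℕ → ℤ → ℝ)
    (hF : ∀ n i, F n i
      = min (f (min (s n i) (θ (c n i))) (c n i))
            (f (max (s n (i+1)) (θ (c n (i+1)))) (c n (i+1))))
    (hscheme : ∀ n i, s (n+1) i = s n i - lam * (F n i - F n (i-1))) :
    ∀ n i, s n i ∈ Set.Icc (0:ℝ) 1 := by
  -- Lipschitz bound from the derivative bound
  have hlip : ∀ cc ∈ Set.Icc (0:ℝ) 1, ∀ x ∈ Set.Icc (0:ℝ) 1, ∀ y ∈ Set.Icc (0:ℝ) 1,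
      |f x cc - f y cc| ≤ M * |x - y| := by
    intro cc hcc x hx y hy
    have := Convex.norm_image_sub_le_of_norm_deriv_le
      (f := fun t => f t cc) (s := Set.Icc (0:ℝ) 1)
      (fun z hz => hdiff cc hcc z hz) (fun z hz => hM cc hcc z hz)
      (convex_Icc 0 1) hy hx
    simpa [Real.norm_eq_abs] using this
  intro n
  induction n with
  | zero => exact hs0
  | succ n ih =>
    intro i
    set ci := c n i with hci
    have hcin : ci ∈ Set.Icc (0:ℝ) 1 := hc n i
    have hsi := ih i
    have hθi := hθ ci hcin
    obtain ⟨hs0i, hs1i⟩ := hsi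
    obtain ⟨hθ0, hθ1⟩ := hθi
    -- F is nonnegative
    have hFnn : ∀ j, 0 ≤ F n j := by
      intro j
      rw [hF n j]
      have h1 : min (s n j) (θ (c n j)) ∈ Set.Icc (0:ℝ) 1 :=
        ⟨le_min (ih j).1 (hθ _ (hc n j)).1, min_le_of_left_le (ih j).2⟩
      have h2 : max (s n (j+1)) (θ (c n (j+1))) ∈ Set.Icc (0:ℝ) 1 :=
        ⟨le_max_of_le_left (ih (j+1)).1, max_le (ih (j+1)).2 (hθ _ (hc n (j+1))).2⟩
      exact le_min (hnn _ (hc n j) _ h1) (hnn _ (hc n (j+1)) _ h2)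
    have hMnn : 0 ≤ M := le_trans (abs_nonneg _) (hM (c 0 0) (hc 0 0) 0 ⟨le_refl _, zero_le_one⟩)
    rw [hscheme n i]
    constructor
    · -- lower bound
      have hτ : min (s n i) (θ ci) ∈ Set.Icc (0:ℝ) 1 :=
        ⟨le_min hs0i hθ0, min_le_of_left_le hs1i⟩
      have hFi : F n i ≤ f (min (s n i) (θ ci)) ci := by
        rw [hF n i]; exact min_le_left _ _
      have hfτ : f (min (s n i) (θ ci)) ci ≤ M * s n i := by
        have h0 : (0:ℝ) ∈ Set.Icc (0:ℝ) 1 := ⟨le_refl _, zero_le_one⟩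
        have := hlip ci hcin _ hτ 0 h0
        rw [hf0 ci hcin, sub_zero, sub_zero] at this
        have h1 : f (min (s n i) (θ ci)) ci ≤ M * |min (s n i) (θ ci)| :=
          le_trans (le_abs_self _) this
        have h2 : |min (s n i) (θ ci)| = min (s n i) (θ ci) := abs_of_nonneg hτ.1
        rw [h2] at h1
        exact le_trans h1 (by nlinarith [min_le_left (s n i) (θ ci)])
      have : lam * (F n i - F n (i-1)) ≤ lam * F n i := by
        have := hFnn (i-1); nlinarith
      have h2 : lam * F n i ≤ lam * (M * s n i) :=
        mul_le_mul_of_nonneg_left (le_trans hFi hfτ) hlam.le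
      nlinarith
    · -- upper bound
      have hσ : max (s n i) (θ ci) ∈ Set.Icc (0:ℝ) 1 :=
        ⟨le_max_of_le_left hs0i, max_le hs1i hθ1⟩
      have hFi1 : F n (i-1) ≤ f (max (s n i) (θ ci)) ci := by
        have := hF n (i-1)
        rw [show i - 1 + 1 = i by ring] at this
        rw [this]; exact min_le_right _ _
      have hfσ : f (max (s n i) (θ ci)) ci ≤ M * (1 - s n i) := by
        have h1m : (1:ℝ) ∈ Set.Icc (0:ℝ) 1 := ⟨zero_le_one, le_refl _⟩
        have := hlip ci hcin _ hσ 1 h1m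
        rw [hf1 ci hcin, sub_zero] at this
        have h1 : f (max (s n i) (θ ci)) ci ≤ M * |max (s n i) (θ ci) - 1| :=
          le_trans (le_abs_self _) this
        have h2 : |max (s n i) (θ ci) - 1| = 1 - max (s n i) (θ ci) := by
          rw [abs_of_nonpos (by linarith [hσ.2])]; ring
        rw [h2] at h1
        exact le_trans h1 (by nlinarith [le_max_left (s n i) (θ ci)])
      have h3 : lam * F n (i-1) ≤ lam * (M * (1 - s n i)) :=
        mul_le_mul_of_nonneg_left (le_trans hFi1 hfσ) hlam.le
      have h4 := hFnn i
      nlinarith
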